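/- Let n ≥ 2, let d > 1 be an integer, and let a = (a_1,…,a_{n-1}) ∈ ℤ^{n-1} with gcd{d, a_1, …, a_{n-1}} = 1. Let B be the n×n block matrix [[I_{n-1}, a],[0, d]]. Then J(B) = ℤ^{1×n}/r(B) ≅ ℤ/dℤ, and if C ∈ 𝒩𝒮_n is any matrix such that CᵀB is diagonal with strictly positive diagonal entries, then J(C) = ℤ^{1×n}/r(C) ≅ ⊕_{i=1}^{n-1} ℤ/(d/gcd(a_i,d))ℤ. -/

import Mathlib

open Matrix

/-- An `n × n` integer matrix is weakly nonsingular if it has rank `n` and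
every column is unimodular (the gcd of the entries of each column is `1`). -/
def WeaklyNonsingular {n : ℕ} (B : Matrix (Fin n) (Fin n) ℤ) : Prop :=
  B.rank = n ∧ ∀ j : Fin n, Finset.univ.gcd (fun i => B i j) = 1

/-- The row space `r(A)` of a matrix: the subgroup (submodule) of `ℤ^{1×n}`
consisting of all `v * A`. -/
def rowSpace {m n : ℕ} (A : Matrix (Fin m) (Fin n) ℤ) : Submodule ℤ (Fin n → ℤ) :=
  LinearMap.range A.vecMulLinear

/-- The block matrix `[[I_n, a], [0, d]]` of size `n+1`. -/
def Bcol {n : ℕ} (d : ℤ) (a : Fin n → ℤ) : Matrix (Fin (n + 1)) (Fin (n + 1)) ℤ :=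
  Matrix.of fun i j =>
    if hj : j = Fin.last n then
      if hi : i = Fin.last n then d else a (i.castPred hi)
    else
      if i = j then 1 else 0

namespace Aux14
variable {n : ℕ}

lemma csl (i : Fin n) : i.castSucc ≠ Fin.last n := (Fin.castSucc_lt_last i).ne

lemma Bcol_cs (d : ℤ) (a : Fin n → ℤ) (i : Fin (n+1)) (k : Fin n) :
    Bcol d a i k.castSucc = if i = k.castSucc then 1 else 0 := by
  simp [Bcol, csl]

lemma Bcol_cs_last (d : ℤ) (a : Fin n → ℤ) (k : Fin n) :
    Bcol d a k.castSucc (Fin.last n) = a k := by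
  simp [Bcol, csl]

lemma Bcol_last_last (d : ℤ) (a : Fin n → ℤ) :
    Bcol d a (Fin.last n) (Fin.last n) = d := by
  simp [Bcol]

noncomputable def quotEquivOf {k : ℕ} {N : Type*} [AddCommGroup N] [Module ℤ N]
    (p : Submodule ℤ (Fin k → ℤ)) (f : (Fin k → ℤ) →ₗ[ℤ] N)
    (h : LinearMap.ker f = p) (hs : Function.Surjective f) :
    ((Fin k → ℤ) ⧸ p) ≃+ N :=
  ((Submodule.quotEquivOfEq p _ h.symm).trans (f.quotKerEquivOfSurjective hs)).toAddEquiv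

lemma vecMul_apply {m k : ℕ} (v : Fin m → ℤ) (M : Matrix (Fin m) (Fin k) ℤ) (j : Fin k) :
    (v ᵥ* M) j = ∑ i, v i * M i j := by
  simp [Matrix.vecMul, dotProduct]

lemma vecMul_Bcol_cs (d : ℤ) (a : Fin n → ℤ) (v : Fin (n+1) → ℤ) (k : Fin n) :
    (v ᵥ* Bcol d a) k.castSucc = v k.castSucc := by
  rw [vecMul_apply]
  simp [Bcol_cs, mul_ite]

lemma vecMul_Bcol_last (d : ℤ) (a : Fin n → ℤ) (v : Fin (n+1) → ℤ) :
    (v ᵥ* Bcol d a) (Fin.last n) = (∑ i, v i.castSucc * a i) + v (Fin.last n) * d := by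
  rw [vecMul_apply, Fin.sum_univ_castSucc]
  simp [Bcol_cs_last, Bcol_last_last]

/-- linear form `w ↦ w last - ∑ a i * w i.castSucc` -/
def φform (a : Fin n → ℤ) : (Fin (n+1) → ℤ) →ₗ[ℤ] ℤ where
  toFun w := w (Fin.last n) - ∑ i, a i * w i.castSucc
  map_add' x y := by
    simp only [Pi.add_apply, mul_add, Finset.sum_add_distrib]; ring
  map_smul' r x := by
    simp only [Pi.smul_apply, smul_eq_mul, RingHom.id_apply]
    have : ∑ i, a i * (r * x i.castSucc) = r * ∑ i, a i * x i.castSucc := by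
      rw [Finset.mul_sum]; exact Finset.sum_congr rfl fun i _ => by ring
    rw [this]; ring

/-- linear form `w ↦ w i.castSucc + b * w last` -/
def ψform (b : ℤ) (i : Fin n) : (Fin (n+1) → ℤ) →ₗ[ℤ] ℤ where
  toFun w := w i.castSucc + b * w (Fin.last n)
  map_add' x y := by simp only [Pi.add_apply]; ring
  map_smul' r x := by simp only [Pi.smul_apply, smul_eq_mul, RingHom.id_apply]; ring

/-- cast ℤ → ZMod k as a ℤ-linear map -/
def castLM (k : ℕ) : ℤ →ₗ[ℤ] ZMod k := (Int.castAddHom (ZMod k)).toIntLinearMap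

theorem part1 (d : ℕ) (hd : 1 < d) (a : Fin n → ℤ) :
    Nonempty (((Fin (n + 1) → ℤ) ⧸ rowSpace (Bcol (d : ℤ) a)) ≃+ ZMod d) := by
  haveI : NeZero d := ⟨by omega⟩
  set f : (Fin (n+1) → ℤ) →ₗ[ℤ] ZMod d := (castLM d).comp (φform a) with hf
  have hfw : ∀ w, f w = ((w (Fin.last n) - ∑ i, a i * w i.castSucc : ℤ) : ZMod d) := by
    intro w; rfl
  have hker : LinearMap.ker f = rowSpace (Bcol (d : ℤ) a) := by
    ext w
    rw [LinearMap.mem_ker, hfw, ZMod.intCast_zmod_eq_zero_iff_dvd]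
    constructor
    · rintro ⟨k, hk⟩
      refine ⟨Function.update w (Fin.last n) k, ?_⟩
      rw [Matrix.vecMulLinear_apply]
      funext j
      induction j using Fin.lastCases with
      | last =>
        rw [vecMul_Bcol_last]
        have h1 : ∀ i : Fin n, Function.update w (Fin.last n) k i.castSucc = w i.castSucc :=
          fun i => Function.update_of_ne (csl i) _ _
        simp only [h1, Function.update_self]
        have h2 : ∑ i, w i.castSucc * a i = ∑ i, a i * w i.castSucc :=
          Finset.sum_congr rfl fun i _ => mul_comm _ _
        rw [h2]; linarith
      | cast j =>
        rw [vecMul_Bcol_cs, Function.update_of_ne (csl j)]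
    · rintro ⟨v, rfl⟩
      rw [Matrix.vecMulLinear_apply]
      simp only [vecMul_Bcol_last, vecMul_Bcol_cs]
      have h2 : ∑ i, a i * v i.castSucc = ∑ i, v i.castSucc * a i :=
        Finset.sum_congr rfl fun i _ => mul_comm _ _
      rw [h2]
      exact ⟨v (Fin.last n), by ring⟩
  have hsurj : Function.Surjective f := by
    intro x
    refine ⟨Function.update (0 : Fin (n+1) → ℤ) (Fin.last n) (x.val : ℤ), ?_⟩
    rw [hfw]
    have h1 : ∀ i : Fin n,
        Function.update (0 : Fin (n+1) → ℤ) (Fin.last n) ((x.val : ℤ)) i.castSucc = 0 :=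
      fun i => Function.update_of_ne (csl i) _ _
    simp only [h1, mul_zero, Finset.sum_const_zero, Function.update_self, sub_zero]
    simp [ZMod.intCast_cast, ZMod.natCast_val]
  exact ⟨quotEquivOf _ f hker hsurj⟩

lemma key (d : ℕ) (hd : 0 < d) (A M S : ℤ) (hM : 0 < M) (h : M * A + S * d = 0)
    (hcop : Int.gcd M S = 1) :
    M = (d : ℤ) / (Int.gcd A d : ℤ) ∧ S = -(A / (Int.gcd A d : ℤ)) := by
  set g : ℕ := Int.gcd A (d : ℤ) with hgdef
  have hg : 0 < g := Int.gcd_pos_of_ne_zero_right A (by exact_mod_cast hd.ne')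
  have hgz : (g : ℤ) ≠ 0 := by exact_mod_cast hg.ne'
  set A' : ℤ := A / g with hA'
  set D' : ℤ := (d : ℤ) / g with hD'
  have hAe : (g : ℤ) * A' = A := Int.mul_ediv_cancel' (Int.gcd_dvd_left _ _)
  have hDe : (g : ℤ) * D' = d := Int.mul_ediv_cancel' (Int.gcd_dvd_right _ _)
  have hD'pos : 0 < D' := by nlinarith [hg, hDe]
  have hcop' : Int.gcd A' D' = 1 := Int.gcd_div_gcd_div_gcd hg
  have h2 : M * A' + S * D' = 0 := by
    have hz : (g : ℤ) * (M * A' + S * D') = 0 := by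
      linear_combination M * hAe + S * hDe + h
    exact (mul_eq_zero.mp hz).resolve_left hgz
  have hdvd : D' ∣ M := by
    have h3 : D' ∣ M * A' := ⟨-S, by linarith⟩
    have hc : IsCoprime D' A' := Int.isCoprime_iff_gcd_eq_one.mpr (by rwa [Int.gcd_comm])
    exact hc.dvd_of_dvd_mul_right h3
  obtain ⟨t, ht⟩ := hdvd
  have htpos : 0 < t := by nlinarith
  have hS : S = -(t * A') := by
    have hz2 : D' * (t * A' + S) = 0 := by
      rw [ht] at h2; linear_combination h2
    have := (mul_eq_zero.mp hz2).resolve_left hD'pos.ne'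
    linarith
  have ht1 : t = 1 := by
    have h4 : t ∣ M := ⟨D', by rw [ht]; ring⟩
    have h5 : t ∣ S := ⟨-A', by rw [hS]; ring⟩
    have h6 : t ∣ (Int.gcd M S : ℤ) := Int.dvd_coe_gcd h4 h5
    rw [hcop] at h6
    exact Int.eq_one_of_dvd_one htpos.le h6
  constructor
  · rw [ht, ht1, mul_one]
  · rw [hS, ht1, one_mul]

end Aux14

open Aux14

theorem stmt14 {n : ℕ} (hn : 1 ≤ n) (d : ℕ) (hd : 1 < d) (a : Fin n → ℤ)
    (hgcd : Int.gcd (d : ℤ) (Finset.univ.gcd a) = 1) :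
    Nonempty (((Fin (n + 1) → ℤ) ⧸ rowSpace (Bcol (d : ℤ) a)) ≃+ ZMod d) ∧
    ∀ C : Matrix (Fin (n + 1)) (Fin (n + 1)) ℤ, WeaklyNonsingular C →
      (∃ m : Fin (n + 1) → ℤ, (∀ i, 0 < m i) ∧ Cᵀ * Bcol (d : ℤ) a = Matrix.diagonal m) →
      Nonempty (((Fin (n + 1) → ℤ) ⧸ rowSpace C)
        ≃+ ((i : Fin n) → ZMod (d / Int.gcd (a i) (d : ℤ)))) := by
  have hd0 : 0 < d := by omega
  constructor
  · exact part1 d hd a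
  rintro C ⟨hrank, huni⟩ ⟨m, hm, hdiag⟩
  -- notation
  set g : Fin n → ℕ := fun i => Int.gcd (a i) (d : ℤ) with hgdef
  have hgpos : ∀ i, 0 < g i :=
    fun i => Int.gcd_pos_of_ne_zero_right (a i) (by exact_mod_cast hd0.ne')
  set D : Fin n → ℕ := fun i => d / g i with hDdef
  have hgdvd : ∀ i, g i ∣ d := by
    intro i
    have : ((g i : ℕ) : ℤ) ∣ ((d : ℕ) : ℤ) := Int.gcd_dvd_right _ _
    exact_mod_cast this
  have hDpos : ∀ i, 0 < D i := fun i => Nat.div_pos (Nat.le_of_dvd hd0 (hgdvd i)) (hgpos i)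
  have hDcast : ∀ i, ((D i : ℕ) : ℤ) = (d : ℤ) / (g i : ℤ) := by
    intro i; exact_mod_cast (Int.natCast_ediv d (g i))
  set b : Fin n → ℤ := fun i => a i / (g i : ℤ) with hbdef
  -- entries of Cᵀ * B
  have hE : ∀ j k, ∑ i, C i j * Bcol (d : ℤ) a i k = Matrix.diagonal m j k := by
    intro j k
    have := congrFun (congrFun hdiag j) k
    rw [Matrix.mul_apply] at this
    simpa [Matrix.transpose_apply] using this
  -- column relations from identity columns of B
  have hA : ∀ (j) (k : Fin n), C k.castSucc j = if j = k.castSucc then m j else 0 := by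
    intro j k
    have h := hE j k.castSucc
    rw [Matrix.diagonal_apply] at h
    simpa [Bcol_cs, mul_ite, Finset.sum_ite_eq'] using h
  have hCz : ∀ (p k : Fin n), k ≠ p → C k.castSucc p.castSucc = 0 := by
    intro p k hne
    have := hA p.castSucc k
    rwa [if_neg (fun h => hne (Fin.castSucc_injective n h).symm)] at this
  have hCd : ∀ p : Fin n, C p.castSucc p.castSucc = m p.castSucc := by
    intro p
    have := hA p.castSucc p
    rwa [if_pos rfl] at this
  have hCzl : ∀ k : Fin n, C k.castSucc (Fin.last n) = 0 := by
    intro k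
    have := hA (Fin.last n) k
    rwa [if_neg (csl k).symm] at this
  -- relations from last column of B
  have hL : ∀ j, (∑ k : Fin n, C k.castSucc j * a k) + C (Fin.last n) j * (d : ℤ)
      = Matrix.diagonal m j (Fin.last n) := by
    intro j
    have h := hE j (Fin.last n)
    rw [Fin.sum_univ_castSucc] at h
    simpa [Bcol_cs_last, Bcol_last_last] using h
  -- last column of C
  have hClast : C (Fin.last n) (Fin.last n) = 1 := by
    have h := hL (Fin.last n)
    rw [Matrix.diagonal_apply_eq] at h
    have hsum : (∑ k : Fin n, C k.castSucc (Fin.last n) * a k) = 0 := by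
      apply Finset.sum_eq_zero; intro k _; rw [hCzl k, zero_mul]
    rw [hsum, zero_add] at h
    have hpos : 0 < C (Fin.last n) (Fin.last n) := by
      rcases lt_trichotomy (C (Fin.last n) (Fin.last n)) 0 with h1 | h1 | h1
      · exfalso; nlinarith [hm (Fin.last n)]
      · exfalso; rw [h1, zero_mul] at h; exact (hm (Fin.last n)).ne h
      · exact h1
    have hdvd1 : C (Fin.last n) (Fin.last n) ∣ Finset.univ.gcd (fun i => C i (Fin.last n)) := by
      apply Finset.dvd_gcd
      intro i _
      induction i using Fin.lastCases with
      | last => exact dvd_rfl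
      | cast k => rw [hCzl k]; exact dvd_zero _
    rw [huni (Fin.last n)] at hdvd1
    exact Int.eq_one_of_dvd_one hpos.le hdvd1
  -- other columns of C
  have hkey : ∀ p : Fin n, m p.castSucc = ((D p : ℕ) : ℤ)
      ∧ C (Fin.last n) p.castSucc = -(b p) := by
    intro p
    have h := hL p.castSucc
    rw [Matrix.diagonal_apply, if_neg (csl p)] at h
    have hsum : (∑ k : Fin n, C k.castSucc p.castSucc * a k) = m p.castSucc * a p := by
      rw [Finset.sum_eq_single p]
      · rw [hCd p]
      · intro k _ hk; rw [hCz p k hk, zero_mul]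
      · intro h; exact absurd (Finset.mem_univ p) h
    rw [hsum] at h
    -- coprimality from unimodular column
    have hcop : Int.gcd (m p.castSucc) (C (Fin.last n) p.castSucc) = 1 := by
      have hdvd1 : ((Int.gcd (m p.castSucc) (C (Fin.last n) p.castSucc) : ℕ) : ℤ)
          ∣ Finset.univ.gcd (fun i => C i p.castSucc) := by
        apply Finset.dvd_gcd
        intro i _
        induction i using Fin.lastCases with
        | last => exact Int.gcd_dvd_right _ _
        | cast k =>
          by_cases hk : k = p
          · subst hk; rw [hCd k]; exact Int.gcd_dvd_left _ _
          · rw [hCz p k hk]; exact dvd_zero _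
      rw [huni p.castSucc] at hdvd1
      have := Int.eq_one_of_dvd_one (by positivity) hdvd1
      exact_mod_cast this
    have := key d hd0 (a p) (m p.castSucc) (C (Fin.last n) p.castSucc) (hm p.castSucc) h hcop
    rw [hDcast p]
    exact this
  -- the quotient map
  set ψ : (Fin (n+1) → ℤ) →ₗ[ℤ] ((i : Fin n) → ZMod (D i)) :=
    LinearMap.pi (fun i => (castLM (D i)).comp (ψform (b i) i)) with hψ
  have hψw : ∀ w i, ψ w i = ((w i.castSucc + b i * w (Fin.last n) : ℤ) : ZMod (D i)) := by
    intro w i; rfl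
  -- columns of C fully known; compute vecMul
  have hvc_cs : ∀ (v : Fin (n+1) → ℤ) (p : Fin n),
      (v ᵥ* C) p.castSucc = v p.castSucc * ((D p : ℕ) : ℤ) + v (Fin.last n) * (-(b p)) := by
    intro v p
    rw [Aux14.vecMul_apply, Fin.sum_univ_castSucc]
    congr 1
    · rw [Finset.sum_eq_single p]
      · rw [hCd p, (hkey p).1]
      · intro k _ hk; rw [hCz p k hk, mul_zero]
      · intro h; exact absurd (Finset.mem_univ p) h
    · rw [(hkey p).2]
  have hvc_last : ∀ (v : Fin (n+1) → ℤ), (v ᵥ* C) (Fin.last n) = v (Fin.last n) := by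
    intro v
    rw [Aux14.vecMul_apply, Fin.sum_univ_castSucc]
    have : (∑ k : Fin n, v k.castSucc * C k.castSucc (Fin.last n)) = 0 :=
      Finset.sum_eq_zero fun k _ => by rw [hCzl k, mul_zero]
    rw [this, hClast, zero_add, mul_one]
  have hker : LinearMap.ker ψ = rowSpace C := by
    ext w
    rw [LinearMap.mem_ker]
    constructor
    · intro h0
      have hdv : ∀ i : Fin n, ((D i : ℕ) : ℤ) ∣ w i.castSucc + b i * w (Fin.last n) := by
        intro i
        have := congrFun h0 i
        rw [hψw] at this
        simpa using (ZMod.intCast_zmod_eq_zero_iff_dvd _ _).mp this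
      choose k hk using hdv
      refine ⟨fun j => if h : j = Fin.last n then w j else k (j.castPred h), ?_⟩
      rw [Matrix.vecMulLinear_apply]
      funext j
      induction j using Fin.lastCases with
      | last => rw [hvc_last]; simp
      | cast p =>
        rw [hvc_cs]
        simp only [dif_neg (csl p), Fin.castPred_castSucc, dif_pos]
        linear_combination -hk p
    · rintro ⟨v, rfl⟩
      rw [Matrix.vecMulLinear_apply]
      funext i
      rw [hψw, hvc_cs, hvc_last]
      have : (v ᵥ* C) i.castSucc + b i * v (Fin.last n)
          = v i.castSucc * ((D i : ℕ) : ℤ) := by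
        rw [hvc_cs]; ring
      simp only [Pi.zero_apply]
      rw [show v i.castSucc * ((D i : ℕ) : ℤ) + v (Fin.last n) * -(b i) + b i * v (Fin.last n)
          = ((D i : ℕ) : ℤ) * v i.castSucc by ring]
      push_cast
      simp [ZMod.natCast_self]
  have hsurj : Function.Surjective ψ := by
    intro x
    haveI : ∀ i : Fin n, NeZero (D i) := fun i => ⟨(hDpos i).ne'⟩
    refine ⟨fun j => if h : j = Fin.last n then 0 else (((x (j.castPred h)).val : ℕ) : ℤ), ?_⟩
    funext i
    rw [hψw]
    simp only [dif_neg (csl i), Fin.castPred_castSucc, dif_pos, mul_zero, add_zero]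
    push_cast
    simp [ZMod.natCast_val, ZMod.intCast_cast]
  exact ⟨quotEquivOf _ ψ hker hsurj⟩
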